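/- Let H be a normal ideal of a directed λ,ρ-weakly commutative GPEA E. Then H^I := {⟨f_j : j ∈ I⟩ : f_j ∈ H for all j} is a normal ideal of the kite pseudo effect algebra K_I^{λ,ρ}(E). In particular, E^I (the lower part of the kite) is a maximal ideal of K_I^{λ,ρ}(E). -/

import Mathlib

open scoped Classical

/-- A generalized pseudo effect algebra (GPEA): a partial algebra `(E; +, 0)`
satisfying (GP1)-(GP5). The partial addition is modelled by an `Option`-valued
operation: `add a b = some c` means `a + b` is defined and equals `c`. -/
structure GPEA (E : Type) where
  add : E → E → Option E
  zero : E
  assoc_ex : ∀ a b c : E,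
    (∃ ab, add a b = some ab ∧ (add ab c).isSome) ↔
    (∃ bc, add b c = some bc ∧ (add a bc).isSome)
  assoc_eq : ∀ a b c ab bc : E, add a b = some ab → add b c = some bc →
    add ab c = add a bc
  exch : ∀ a b ab : E, add a b = some ab →
    (∃ d, add d a = some ab) ∧ (∃ e, add b e = some ab)
  cancel_left : ∀ a b c x : E, add a b = some x → add a c = some x → b = c
  cancel_right : ∀ a b c x : E, add b a = some x → add c a = some x → b = c
  pos : ∀ a b : E, add a b = some zero → a = zero ∧ b = zero
  add_zero : ∀ a : E, add a zero = some a
  zero_add : ∀ a : E, add zero a = some a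

/-- The induced order of a GPEA: `a ≤ b` iff `∃ c, a + c = b`. -/
def GPEA.le {E : Type} (G : GPEA E) (a b : E) : Prop := ∃ c, G.add a c = some b

/-- `b ⊖ a` : the element `c` with `c + a = b` (if it exists, else `0`). -/
noncomputable def GPEA.lsub {E : Type} (G : GPEA E) (b a : E) : E :=
  if h : ∃ c, G.add c a = some b then h.choose else G.zero

/-- `a ⊘ b` : the element `c` with `a + c = b` (if it exists, else `0`). -/
noncomputable def GPEA.rsub {E : Type} (G : GPEA E) (a b : E) : E :=
  if h : ∃ c, G.add a c = some b then h.choose else G.zero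

/-- A GPEA is directed if any two elements have a common upper bound. -/
def GPEA.directed {E : Type} (G : GPEA E) : Prop :=
  ∀ a b : E, ∃ c, G.le a c ∧ G.le b c

/-- A pseudo effect algebra (PEA): a partial algebra `(E; +, 0, 1)`
satisfying axioms (i)-(iv). -/
structure PEA (E : Type) where
  add : E → E → Option E
  zero : E
  one : E
  assoc_ex : ∀ a b c : E,
    (∃ ab, add a b = some ab ∧ (add ab c).isSome) ↔
    (∃ bc, add b c = some bc ∧ (add a bc).isSome)
  assoc_eq : ∀ a b c ab bc : E, add a b = some ab → add b c = some bc →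
    add ab c = add a bc
  compl_right : ∀ a : E, ∃! d, add a d = some one
  compl_left : ∀ a : E, ∃! e, add e a = some one
  exch : ∀ a b ab : E, add a b = some ab →
    (∃ d, add d a = some ab) ∧ (∃ e, add b e = some ab)
  one_left : ∀ a : E, (add one a).isSome → a = zero
  one_right : ∀ a : E, (add a one).isSome → a = zero

/-- The induced order of a PEA. -/
def PEA.le {E : Type} (P : PEA E) (a b : E) : Prop := ∃ c, P.add a c = some b

/-- `a⁻` : the unique element with `a⁻ + a = 1`. -/
noncomputable def PEA.negL {E : Type} (P : PEA E) (a : E) : E :=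
  (P.compl_left a).choose

/-- `a∼` : the unique element with `a + a∼ = 1`. -/
noncomputable def PEA.negR {E : Type} (P : PEA E) (a : E) : E :=
  (P.compl_right a).choose

/-- `E` is `λ,ρ`-weakly commutative. -/
def GPEA.lrWC {E I : Type} (G : GPEA E) (l r : I ≃ I) : Prop :=
  (∀ f a : I → E, ∀ i : I,
    ((G.add (f (r.symm i)) (a i)).isSome ↔ (G.add (a i) (f (l.symm i))).isSome)) ∧
  (∀ g b : I → E, ∀ i : I,
    ((G.add (g (l.symm i)) (b i)).isSome ↔ (G.add (b i) (g (r.symm i))).isSome))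

/-- The partial addition of the kite `K_I^{λ,ρ}(E)`: the carrier is
`(I → E) ⊕ (I → E)`, `Sum.inl` being the lower copy `E^I` and `Sum.inr` the
upper copy `(Ē)^I`; rules (I)-(IV). -/
noncomputable def kiteAdd {E I : Type} (G : GPEA E) (l r : I ≃ I) :
    (I → E) ⊕ (I → E) → (I → E) ⊕ (I → E) → Option ((I → E) ⊕ (I → E))
  | Sum.inr _, Sum.inr _ => none
  | Sum.inr a, Sum.inl f =>
      if _ : ∀ i, G.le (f (r.symm i)) (a i) then
        some (Sum.inr fun i => G.rsub (f (r.symm i)) (a i))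
      else none
  | Sum.inl f, Sum.inr a =>
      if _ : ∀ i, G.le (f (l.symm i)) (a i) then
        some (Sum.inr fun i => G.lsub (a i) (f (l.symm i)))
      else none
  | Sum.inl f, Sum.inl g =>
      if h : ∀ j, (G.add (f j) (g j)).isSome then
        some (Sum.inl fun j => (G.add (f j) (g j)).get (h j))
      else none

/-- The bottom element `0 = ⟨0_j⟩` of the kite. -/
def kiteZero (E I : Type) (G : GPEA E) : (I → E) ⊕ (I → E) :=
  Sum.inl fun _ => G.zero

/-- The top element `1 = ⟨0̄_i⟩` of the kite. -/
def kiteOne (E I : Type) (G : GPEA E) : (I → E) ⊕ (I → E) :=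
  Sum.inr fun _ => G.zero

/-- Riesz decomposition property RDP for a GPEA. -/
def GPEA.RDP {E : Type} (G : GPEA E) : Prop :=
  ∀ a1 a2 b1 b2 x : E, G.add a1 a2 = some x → G.add b1 b2 = some x →
    ∃ c11 c12 c21 c22 : E, G.add c11 c12 = some a1 ∧ G.add c21 c22 = some a2 ∧
      G.add c11 c21 = some b1 ∧ G.add c12 c22 = some b2

/-- RDP₁ for a GPEA. -/
def GPEA.RDP1 {E : Type} (G : GPEA E) : Prop :=
  ∀ a1 a2 b1 b2 x : E, G.add a1 a2 = some x → G.add b1 b2 = some x →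
    ∃ c11 c12 c21 c22 : E, G.add c11 c12 = some a1 ∧ G.add c21 c22 = some a2 ∧
      G.add c11 c21 = some b1 ∧ G.add c12 c22 = some b2 ∧
      (∀ u v : E, G.le u c12 → G.le v c21 → G.add u v = G.add v u)

/-- RDP₂ for a GPEA (`c₁₂ ∧ c₂₁ = 0`). -/
def GPEA.RDP2 {E : Type} (G : GPEA E) : Prop :=
  ∀ a1 a2 b1 b2 x : E, G.add a1 a2 = some x → G.add b1 b2 = some x →
    ∃ c11 c12 c21 c22 : E, G.add c11 c12 = some a1 ∧ G.add c21 c22 = some a2 ∧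
      G.add c11 c21 = some b1 ∧ G.add c12 c22 = some b2 ∧
      (∀ z : E, G.le z c12 → G.le z c21 → z = G.zero)

/-- RDP₀ for a GPEA. -/
def GPEA.RDP0 {E : Type} (G : GPEA E) : Prop :=
  ∀ a b c x : E, G.add b c = some x → G.le a x →
    ∃ b1 c1 : E, G.le b1 b ∧ G.le c1 c ∧ G.add b1 c1 = some a

/-- RDP for a PEA. -/
def PEA.RDP {E : Type} (P : PEA E) : Prop :=
  ∀ a1 a2 b1 b2 x : E, P.add a1 a2 = some x → P.add b1 b2 = some x →
    ∃ c11 c12 c21 c22 : E, P.add c11 c12 = some a1 ∧ P.add c21 c22 = some a2 ∧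
      P.add c11 c21 = some b1 ∧ P.add c12 c22 = some b2

/-- RDP₁ for a PEA. -/
def PEA.RDP1 {E : Type} (P : PEA E) : Prop :=
  ∀ a1 a2 b1 b2 x : E, P.add a1 a2 = some x → P.add b1 b2 = some x →
    ∃ c11 c12 c21 c22 : E, P.add c11 c12 = some a1 ∧ P.add c21 c22 = some a2 ∧
      P.add c11 c21 = some b1 ∧ P.add c12 c22 = some b2 ∧
      (∀ u v : E, P.le u c12 → P.le v c21 → P.add u v = P.add v u)

/-- RDP₂ for a PEA. -/
def PEA.RDP2 {E : Type} (P : PEA E) : Prop :=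
  ∀ a1 a2 b1 b2 x : E, P.add a1 a2 = some x → P.add b1 b2 = some x →
    ∃ c11 c12 c21 c22 : E, P.add c11 c12 = some a1 ∧ P.add c21 c22 = some a2 ∧
      P.add c11 c21 = some b1 ∧ P.add c12 c22 = some b2 ∧
      (∀ z : E, P.le z c12 → P.le z c21 → z = P.zero)

/-- RDP₀ for a PEA. -/
def PEA.RDP0 {E : Type} (P : PEA E) : Prop :=
  ∀ a b c x : E, P.add b c = some x → P.le a x →
    ∃ b1 c1 : E, P.le b1 b ∧ P.le c1 c ∧ P.add b1 c1 = some a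

/-- Ideal of a GPEA. -/
def GPEA.isIdeal {E : Type} (G : GPEA E) (A : Set E) : Prop :=
  G.zero ∈ A ∧ (∀ x y z : E, x ∈ A → y ∈ A → G.add x y = some z → z ∈ A) ∧
  (∀ x y : E, G.le x y → y ∈ A → x ∈ A)

/-- Normal ideal of a GPEA: `x + A = A + x` for all `x`. -/
def GPEA.isNormalIdeal {E : Type} (G : GPEA E) (A : Set E) : Prop :=
  G.isIdeal A ∧
  ∀ x : E, {z | ∃ y ∈ A, G.add x y = some z} = {z | ∃ y ∈ A, G.add y x = some z}

/-- Ideal of a PEA. -/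
def PEA.isIdeal {E : Type} (P : PEA E) (A : Set E) : Prop :=
  P.zero ∈ A ∧ (∀ x y z : E, x ∈ A → y ∈ A → P.add x y = some z → z ∈ A) ∧
  (∀ x y : E, P.le x y → y ∈ A → x ∈ A)

/-- Normal ideal of a PEA. -/
def PEA.isNormalIdeal {E : Type} (P : PEA E) (A : Set E) : Prop :=
  P.isIdeal A ∧
  ∀ x : E, {z | ∃ y ∈ A, P.add x y = some z} = {z | ∃ y ∈ A, P.add y x = some z}

/-- Maximal ideal of a PEA: proper and not properly contained in any proper ideal. -/
def PEA.isMaximalIdeal {E : Type} (P : PEA E) (A : Set E) : Prop :=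
  P.isIdeal A ∧ A ≠ Set.univ ∧
  ∀ B : Set E, P.isIdeal B → A ⊆ B → B = A ∨ B = Set.univ

/-- `i` and `j` are connected: `(ρ∘λ⁻¹)^m(i) = j` or `(λ∘ρ⁻¹)^m(i) = j` for some `m ≥ 0`. -/
def connected {I : Type} (l r : I ≃ I) (i j : I) : Prop :=
  ∃ m : ℕ, (fun x => r (l.symm x))^[m] i = j ∨ (fun x => l (r.symm x))^[m] i = j

section KiteHelpers

variable {E I : Type} (G : GPEA E) (l r : I ≃ I)

lemma kadd_inl_inl_some {f g : I → E} {z}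
    (h : kiteAdd G l r (Sum.inl f) (Sum.inl g) = some z) :
    ∃ h', z = Sum.inl h' ∧ ∀ j, G.add (f j) (g j) = some (h' j) := by
  simp only [kiteAdd] at h
  split_ifs at h with hc
  refine ⟨_, (Option.some_injective _ h).symm, fun j => ?_⟩
  exact (Option.some_get (hc j)).symm

lemma kadd_inl_inl_of {f g h : I → E}
    (hj : ∀ j, G.add (f j) (g j) = some (h j)) :
    kiteAdd G l r (Sum.inl f) (Sum.inl g) = some (Sum.inl h) := by
  have hc : ∀ j, (G.add (f j) (g j)).isSome := fun j => by rw [hj j]; rfl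
  simp only [kiteAdd]
  rw [dif_pos hc]
  simp only [Option.some.injEq, Sum.inl.injEq]
  funext j
  have := hj j
  simp [this]

lemma kadd_inr_inl_some {a f : I → E} {z}
    (h : kiteAdd G l r (Sum.inr a) (Sum.inl f) = some z) :
    ∃ b, z = Sum.inr b ∧ ∀ i, G.add (f (r.symm i)) (b i) = some (a i) := by
  simp only [kiteAdd] at h
  split_ifs at h with hc
  refine ⟨_, (Option.some_injective _ h).symm, fun i => ?_⟩
  have hex : ∃ c, G.add (f (r.symm i)) c = some (a i) := hc i
  simp only [GPEA.rsub, dif_pos hex]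
  exact hex.choose_spec

lemma kadd_inr_inl_of {a f b : I → E}
    (hj : ∀ i, G.add (f (r.symm i)) (b i) = some (a i)) :
    kiteAdd G l r (Sum.inr a) (Sum.inl f) = some (Sum.inr b) := by
  have hc : ∀ i, G.le (f (r.symm i)) (a i) := fun i => ⟨b i, hj i⟩
  simp only [kiteAdd]
  rw [dif_pos hc]
  simp only [Option.some.injEq, Sum.inr.injEq]
  funext i
  have hex : ∃ c, G.add (f (r.symm i)) c = some (a i) := ⟨b i, hj i⟩
  simp only [GPEA.rsub, dif_pos hex]
  exact G.cancel_left _ _ _ _ hex.choose_spec (hj i)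

lemma kadd_inl_inr_some {f a : I → E} {z}
    (h : kiteAdd G l r (Sum.inl f) (Sum.inr a) = some z) :
    ∃ b, z = Sum.inr b ∧ ∀ i, G.add (b i) (f (l.symm i)) = some (a i) := by
  simp only [kiteAdd] at h
  split_ifs at h with hc
  refine ⟨_, (Option.some_injective _ h).symm, fun i => ?_⟩
  have hex : ∃ c, G.add c (f (l.symm i)) = some (a i) := by
    obtain ⟨c, hc'⟩ := hc i
    exact (G.exch _ _ _ hc').1
  simp only [GPEA.lsub, dif_pos hex]
  exact hex.choose_spec

lemma kadd_inl_inr_of {f a b : I → E}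
    (hj : ∀ i, G.add (b i) (f (l.symm i)) = some (a i)) :
    kiteAdd G l r (Sum.inl f) (Sum.inr a) = some (Sum.inr b) := by
  have hc : ∀ i, G.le (f (l.symm i)) (a i) := fun i => (G.exch _ _ _ (hj i)).2
  simp only [kiteAdd]
  rw [dif_pos hc]
  simp only [Option.some.injEq, Sum.inr.injEq]
  funext i
  have hex : ∃ c, G.add c (f (l.symm i)) = some (a i) := ⟨b i, hj i⟩
  simp only [GPEA.lsub, dif_pos hex]
  exact G.cancel_right _ _ _ _ hex.choose_spec (hj i)

lemma normal_swap {H : Set E} (hH : G.isNormalIdeal H) {x y z : E}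
    (hy : y ∈ H) (hxy : G.add x y = some z) : ∃ y' ∈ H, G.add y' x = some z := by
  have hset := hH.2 x
  have hz : z ∈ {z | ∃ y ∈ H, G.add x y = some z} := ⟨y, hy, hxy⟩
  rw [hset] at hz
  exact hz

lemma normal_swap' {H : Set E} (hH : G.isNormalIdeal H) {x y z : E}
    (hy : y ∈ H) (hyx : G.add y x = some z) : ∃ y' ∈ H, G.add x y' = some z := by
  have hset := hH.2 x
  have hz : z ∈ {z | ∃ y ∈ H, G.add y x = some z} := ⟨y, hy, hyx⟩
  rw [← hset] at hz
  exact hz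

end KiteHelpers

/-- If `H` is a normal ideal of a directed `λ,ρ`-weakly
commutative GPEA `E`, then `H^I` is a normal ideal of the kite `K_I^{λ,ρ}(E)`;
in particular, the lower part `E^I` is a maximal ideal of the kite. -/
theorem kite_normal_ideal {E I : Type} (G : GPEA E) (l r : I ≃ I)
    (hdir : G.directed) (hwc : G.lrWC l r)
    (P : PEA ((I → E) ⊕ (I → E)))
    (hadd : P.add = kiteAdd G l r) (h0 : P.zero = kiteZero E I G)
    (h1 : P.one = kiteOne E I G)
    (H : Set E) (hH : G.isNormalIdeal H) :
    P.isNormalIdeal {x : (I → E) ⊕ (I → E) | ∃ f : I → E, x = Sum.inl f ∧ ∀ j, f j ∈ H} ∧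
    P.isMaximalIdeal {x : (I → E) ⊕ (I → E) | ∃ f : I → E, x = Sum.inl f} := by
  -- zero of the kite is in both sets
  have hzeroL : P.zero ∈ {x : (I → E) ⊕ (I → E) | ∃ f : I → E, x = Sum.inl f ∧ ∀ j, f j ∈ H} :=
    ⟨fun _ => G.zero, by rw [h0]; rfl, fun _ => hH.1.1⟩
  constructor
  · -- H^I is a normal ideal
    refine ⟨⟨hzeroL, ?_, ?_⟩, ?_⟩
    · -- closed under addition
      rintro x y z ⟨f, rfl, hf⟩ ⟨g, rfl, hg⟩ hxy
      rw [hadd] at hxy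
      obtain ⟨h', rfl, hs⟩ := kadd_inl_inl_some G l r hxy
      exact ⟨h', rfl, fun j => hH.1.2.1 _ _ _ (hf j) (hg j) (hs j)⟩
    · -- downward closed
      rintro x y ⟨c, hc⟩ ⟨g, rfl, hg⟩
      rw [hadd] at hc
      cases x with
      | inr a =>
        cases c with
        | inl k =>
          obtain ⟨b, hb, -⟩ := kadd_inr_inl_some G l r hc
          exact absurd hb (by simp)
        | inr b => exact absurd hc (by simp only [kiteAdd]; simp)
      | inl f =>
        cases c with
        | inr b =>
          obtain ⟨b', hb', -⟩ := kadd_inl_inr_some G l r hc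
          exact absurd hb' (by simp)
        | inl k =>
          obtain ⟨h', hh', hs⟩ := kadd_inl_inl_some G l r hc
          obtain rfl : g = h' := by simpa using hh'
          exact ⟨f, rfl, fun j => hH.1.2.2 _ _ ⟨k j, hs j⟩ (hg j)⟩
    · -- normality
      intro x
      ext z
      simp only [Set.mem_setOf_eq]
      constructor
      · rintro ⟨y, ⟨k, rfl, hk⟩, hxy⟩
        rw [hadd] at hxy
        cases x with
        | inl f =>
          obtain ⟨h', rfl, hs⟩ := kadd_inl_inl_some G l r hxy
          have hch : ∀ j, ∃ y' ∈ H, G.add y' (f j) = some (h' j) :=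
            fun j => normal_swap G hH (hk j) (hs j)
          choose w hw1 hw2 using hch
          exact ⟨Sum.inl w, ⟨w, rfl, hw1⟩, by
            rw [hadd]; exact kadd_inl_inl_of G l r hw2⟩
        | inr a =>
          obtain ⟨b, rfl, hs⟩ := kadd_inr_inl_some G l r hxy
          have hch : ∀ i, ∃ y' ∈ H, G.add (b i) y' = some (a i) :=
            fun i => normal_swap' G hH (hk (r.symm i)) (hs i)
          choose w hw1 hw2 using hch
          refine ⟨Sum.inl (fun j => w (l j)), ⟨_, rfl, fun j => hw1 (l j)⟩, ?_⟩
          rw [hadd]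
          exact kadd_inl_inr_of G l r (fun i => by
            simpa [Equiv.apply_symm_apply] using hw2 i)
      · rintro ⟨y, ⟨k, rfl, hk⟩, hyx⟩
        rw [hadd] at hyx
        cases x with
        | inl f =>
          obtain ⟨h', rfl, hs⟩ := kadd_inl_inl_some G l r hyx
          have hch : ∀ j, ∃ y' ∈ H, G.add (f j) y' = some (h' j) :=
            fun j => normal_swap' G hH (hk j) (hs j)
          choose w hw1 hw2 using hch
          exact ⟨Sum.inl w, ⟨w, rfl, hw1⟩, by
            rw [hadd]; exact kadd_inl_inl_of G l r hw2⟩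
        | inr a =>
          obtain ⟨b, rfl, hs⟩ := kadd_inl_inr_some G l r hyx
          have hch : ∀ i, ∃ y' ∈ H, G.add y' (b i) = some (a i) :=
            fun i => normal_swap G hH (hk (l.symm i)) (hs i)
          choose w hw1 hw2 using hch
          refine ⟨Sum.inl (fun j => w (r j)), ⟨_, rfl, fun j => hw1 (r j)⟩, ?_⟩
          rw [hadd]
          exact kadd_inr_inl_of G l r (fun i => by
            simpa [Equiv.apply_symm_apply] using hw2 i)
  · -- E^I is a maximal ideal
    have hIdeal : P.isIdeal {x : (I → E) ⊕ (I → E) | ∃ f : I → E, x = Sum.inl f} := by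
      refine ⟨⟨fun _ => G.zero, by rw [h0]; rfl⟩, ?_, ?_⟩
      · rintro x y z ⟨f, rfl⟩ ⟨g, rfl⟩ hxy
        rw [hadd] at hxy
        obtain ⟨h', rfl, -⟩ := kadd_inl_inl_some G l r hxy
        exact ⟨h', rfl⟩
      · rintro x y ⟨c, hc⟩ ⟨g, rfl⟩
        rw [hadd] at hc
        cases x with
        | inr a =>
          cases c with
          | inl k =>
            obtain ⟨b, hb, -⟩ := kadd_inr_inl_some G l r hc
            exact absurd hb (by simp)
          | inr b => exact absurd hc (by simp only [kiteAdd]; simp)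
        | inl f => exact ⟨f, rfl⟩
    refine ⟨hIdeal, ?_, ?_⟩
    · -- proper
      intro hcon
      have : Sum.inr (fun _ : I => G.zero) ∈
          {x : (I → E) ⊕ (I → E) | ∃ f : I → E, x = Sum.inl f} := by
        rw [hcon]; exact Set.mem_univ _
      obtain ⟨f, hf⟩ := this
      cases hf
    · -- maximal
      intro B hB hUB
      by_cases hBU : B ⊆ {x : (I → E) ⊕ (I → E) | ∃ f : I → E, x = Sum.inl f}
      · exact Or.inl (Set.Subset.antisymm hBU hUB)
      · right
        rw [Set.not_subset] at hBU
        obtain ⟨x, hxB, hxU⟩ := hBU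
        obtain a | a := x
        · exact absurd ⟨a, rfl⟩ hxU
        · -- x = inr a ∈ B; show every element is in B
          rw [Set.eq_univ_iff_forall]
          rintro (f | b)
          · exact hUB ⟨f, rfl⟩
          · -- get common upper bounds pointwise
            have hch : ∀ i, ∃ u d t, G.add d (a i) = some u ∧ G.add (b i) t = some u := by
              intro i
              obtain ⟨u, ⟨s, hs⟩, ⟨t, ht⟩⟩ := hdir (a i) (b i)
              obtain ⟨d, hd⟩ := (G.exch _ _ _ hs).1
              exact ⟨u, d, t, hd, ht⟩
            choose u d t hd ht using hch
            have h1 : kiteAdd G l r (Sum.inr u) (Sum.inl (fun j => d (r j))) =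
                some (Sum.inr a) :=
              kadd_inr_inl_of G l r (fun i => by
                simpa [Equiv.apply_symm_apply] using hd i)
            have hu : Sum.inr u ∈ B :=
              hB.2.2 _ _ ⟨Sum.inl (fun j => d (r j)), by rw [hadd]; exact h1⟩ hxB
            have h2 : kiteAdd G l r (Sum.inl (fun j => t (l j))) (Sum.inr u) =
                some (Sum.inr b) :=
              kadd_inl_inr_of G l r (fun i => by
                simpa [Equiv.apply_symm_apply] using ht i)
            exact hB.2.1 _ _ _ (hUB ⟨_, rfl⟩) hu (by rw [hadd]; exact h2)
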